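/- For every permutation σ of {1,…,k}, every α ∈ [0,1), every β ∈ [1,2), every level i ∈ {0,…,m}, and every cluster A ∈ C_i with trunk P, the tree T_A contains the stem of A: a path whose vertices are copies of the points {v ∈ P : top(A) ≤ d(r,v) ≤ bottom(A)}, such that the tree distance in T_A between the copies of any two such points v, w equals |d(r,v) − d(r,w)|. -/

import Mathlib

open Set

noncomputable section

variable {X : Type} [MetricSpace X] [Fintype X]

/-- `nbr Q δ` is the `δ`-neighborhood `N(Q,δ) = {x : min_{p ∈ Q} d x p ≤ δ}` of `Q`. -/
def nbr (Q : Set X) (δ : ℝ) : Set X := {x | ∃ p ∈ Q, dist x p ≤ δ}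

/-- The horizontal child `A_s = (A ∩ N(P_{σ s}, β·2^{i-2})) \ ⋃_{t<s} A_t` of a cluster `A`
at scale `i` (note `2 ^ i / 4 = 2^{i-2}`, and `⋃_{t<s} A_t = ⋃_{t<s} (A ∩ N(P_{σ t}, β·2^{i-2}))`). -/
def hchild {k : ℕ} (P : Fin k → Set X) (σ : Equiv.Perm (Fin k)) (β : ℝ)
    (A : Set X) (i : ℕ) (s : Fin k) : Set X :=
  (A ∩ nbr (P (σ s)) (β * (2 ^ i / 4))) \
    ⋃ t, ⋃ (_ : t < s), A ∩ nbr (P (σ t)) (β * (2 ^ i / 4))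

/-- The vertical child `A_{s,j}` of a cluster `A` at scale `i`:
the part of the horizontal child `A_s` with `(j-1+α)·2^{i-2} ≤ d r x < (j+α)·2^{i-2}`. -/
def vchild {k : ℕ} (r : X) (P : Fin k → Set X) (σ : Equiv.Perm (Fin k)) (α β : ℝ)
    (A : Set X) (i : ℕ) (s : Fin k) (j : ℕ) : Set X :=
  {x ∈ hchild P σ β A i s |
    ((j : ℝ) - 1 + α) * (2 ^ i / 4) ≤ dist r x ∧ dist r x < ((j : ℝ) + α) * (2 ^ i / 4)}

/-- Clusters of the alternating partitions together with (the indices of) their trunks,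
defined top-down: `partsTAux … n` is the partition `C (m - n)`.  At the top
`C m = {univ}` with trunk `P (σ 0)`; the clusters of `C i` are the nonempty vertical
children `A_{s,j}` (with trunk `P (σ s)`) of clusters `A ∈ C (i+1)`. -/
def partsTAux {k : ℕ} (hk : 0 < k) (r : X) (P : Fin k → Set X) (σ : Equiv.Perm (Fin k))
    (α β : ℝ) (m : ℕ) : ℕ → Set (Set X × Fin k)
  | 0 => {(Set.univ, σ ⟨0, hk⟩)}
  | n + 1 =>
      {Bl | Bl.1.Nonempty ∧
        ∃ A : Set X, (∃ l, (A, l) ∈ partsTAux hk r P σ α β m n) ∧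
          ∃ s : Fin k, ∃ j : ℕ,
            Bl.1 = vchild r P σ α β A (m - (n + 1)) s j ∧ Bl.2 = σ s}

/-- The alternating partition `C i` with trunk indices: `(A, l) ∈ partsT hk r P σ α β m i`
means that `A` is a cluster of `C i` whose trunk is the path `P l`. -/
def partsT {k : ℕ} (hk : 0 < k) (r : X) (P : Fin k → Set X) (σ : Equiv.Perm (Fin k))
    (α β : ℝ) (m i : ℕ) : Set (Set X × Fin k) :=
  partsTAux hk r P σ α β m (m - i)

/-- The alternating partition `C i`. -/
def parts {k : ℕ} (hk : 0 < k) (r : X) (P : Fin k → Set X) (σ : Equiv.Perm (Fin k))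
    (α β : ℝ) (m i : ℕ) : Set (Set X) :=
  {A | ∃ l, (A, l) ∈ partsT hk r P σ α β m i}

/-- A bundled finite metric space. -/
structure FinMetric where
  carrier : Type
  fintype : Fintype carrier
  metric : MetricSpace carrier

/-- The distance function of a bundled finite metric space. -/
def FinMetric.dist (Y : FinMetric) (x y : Y.carrier) : ℝ :=
  @Dist.dist Y.carrier Y.metric.toDist x y

/-- The four-point condition: `Y` is a tree metric (equivalently, `Y` embeds
isometrically in the shortest-path metric of a positively edge-weighted finite tree). -/
def FourPoint (Y : FinMetric) : Prop :=
  ∀ w x y z : Y.carrier,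
    Y.dist w x + Y.dist y z ≤ max (Y.dist w y + Y.dist x z) (Y.dist w z + Y.dist x y)

/-- `stemDom r P A l` is the vertex set of the stem of a cluster `A` with trunk `P l`:
the points `v ∈ P l` with `top A ≤ d r v ≤ bottom A`, where `top A = min_{a ∈ A} d r a`
and `bottom A = max_{a ∈ A} d r a`. -/
def stemDom (r : X) {k : ℕ} (P : Fin k → Set X) (A : Set X) (l : Fin k) : Set X :=
  {v ∈ P l |
    sInf ((fun a => dist r a) '' A) ≤ dist r v ∧ dist r v ≤ sSup ((fun a => dist r a) '' A)}

/-- The data produced by the recursive tree construction for the alternating partitions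
`C 0, …, C m` (all the trees `T_A` viewed inside the final tree `T`), together with the
properties of the construction:
* `T` is a finite tree metric (`tree`), `f : X → T` is the final injection (`f_inj`);
* `stem i A l` gives the vertices in `T` of the stem of a cluster `A ∈ C i` with trunk
  `P l`: it is an isometric copy (for `|d r · − d r ·|`) of the stem domain (`stem_isom`,
  the invariant (I));
* for a singleton cluster `A ∈ C 0`, the tree `T_A` is the single vertex `f x` (`stem_base`);
* `hstem i As l` gives the vertices of the stem `Q_s` of a (nonempty) horizontal child
  `As` with trunk `P l`, again an isometric copy of its domain (`hstem_isom`); the vertical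
  composition identifies the stem of each nonempty vertical child with its copy inside
  `Q_s` (`vert_glue`), and the stem of a cluster `A ∈ C (i+1)` with trunk `P (σ t)` agrees
  with the stem of its trunk horizontal child (`stem_trunk`);
* `hroot i As l` is the root `r_{As}`: the stem vertex of `As` closest to `r` (`hroot_spec`);
* the horizontal composition joins the root of each nonempty horizontal child `A_s`
  (`s ≠ t`) to the root of the trunk child `A_t` by an edge of length `2 ^ (i+1)`
  (`horiz_edge`, for a cluster of `C (i+1)`). -/
structure TreeCon {k : ℕ} (hk : 0 < k) (r : X) (P : Fin k → Set X)
    (σ : Equiv.Perm (Fin k)) (α β : ℝ) (m : ℕ) where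
  T : FinMetric
  tree : FourPoint T
  f : X → T.carrier
  f_inj : Function.Injective f
  stem : ℕ → Set X → Fin k → X → T.carrier
  hstem : ℕ → Set X → Fin k → X → T.carrier
  hroot : ℕ → Set X → Fin k → T.carrier
  stem_isom : ∀ i ≤ m, ∀ A l, (A, l) ∈ partsT hk r P σ α β m i →
    ∀ v ∈ stemDom r P A l, ∀ w ∈ stemDom r P A l,
      T.dist (stem i A l v) (stem i A l w) = |dist r v - dist r w|
  stem_base : ∀ A l, (A, l) ∈ partsT hk r P σ α β m 0 →
    ∀ x ∈ A, ∀ v ∈ stemDom r P A l, stem 0 A l v = f x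
  hstem_isom : ∀ i, i + 1 ≤ m → ∀ A ∈ parts hk r P σ α β m (i + 1), ∀ s : Fin k,
    (hchild P σ β A i s).Nonempty →
      ∀ v ∈ stemDom r P (hchild P σ β A i s) (σ s),
        ∀ w ∈ stemDom r P (hchild P σ β A i s) (σ s),
          T.dist (hstem i (hchild P σ β A i s) (σ s) v)
              (hstem i (hchild P σ β A i s) (σ s) w) = |dist r v - dist r w|
  vert_glue : ∀ i, i + 1 ≤ m → ∀ A ∈ parts hk r P σ α β m (i + 1), ∀ s : Fin k, ∀ j : ℕ,
    (vchild r P σ α β A i s j).Nonempty →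
      ∀ v ∈ stemDom r P (vchild r P σ α β A i s j) (σ s),
        stem i (vchild r P σ α β A i s j) (σ s) v = hstem i (hchild P σ β A i s) (σ s) v
  stem_trunk : ∀ i, i + 1 ≤ m → ∀ A l, (A, l) ∈ partsT hk r P σ α β m (i + 1) →
    ∀ t : Fin k, σ t = l → (hchild P σ β A i t).Nonempty →
      ∀ v ∈ stemDom r P (hchild P σ β A i t) (σ t),
        stem (i + 1) A l v = hstem i (hchild P σ β A i t) (σ t) v
  hroot_spec : ∀ i, i + 1 ≤ m → ∀ A ∈ parts hk r P σ α β m (i + 1), ∀ s : Fin k,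
    (stemDom r P (hchild P σ β A i s) (σ s)).Nonempty →
      ∃ v ∈ stemDom r P (hchild P σ β A i s) (σ s),
        (∀ w ∈ stemDom r P (hchild P σ β A i s) (σ s), dist r v ≤ dist r w) ∧
          hroot i (hchild P σ β A i s) (σ s) = hstem i (hchild P σ β A i s) (σ s) v
  horiz_edge : ∀ i, i + 1 ≤ m → ∀ A l, (A, l) ∈ partsT hk r P σ α β m (i + 1) →
    ∀ t : Fin k, σ t = l → (hchild P σ β A i t).Nonempty →
      ∀ s : Fin k, s ≠ t → (hchild P σ β A i s).Nonempty →
        T.dist (hroot i (hchild P σ β A i s) (σ s)) (hroot i (hchild P σ β A i t) (σ t)) =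
          2 ^ (i + 1)


set_option linter.unusedSectionVars false
set_option maxHeartbeats 1000000


namespace TreeGen

variable {V : Type} [Finite V] (par : V → V) (ht : V → ℝ)

/-- `w` is an ancestor of `u` (an iterated parent). -/
def Anc (w u : V) : Prop := ∃ n, par^[n] u = w

theorem anc_refl (u : V) : Anc par u u := ⟨0, rfl⟩

theorem anc_par (u : V) : Anc par (par u) u := ⟨1, rfl⟩

theorem anc_trans {a b c : V} (h1 : Anc par a b) (h2 : Anc par b c) : Anc par a c := by
  obtain ⟨n1, rfl⟩ := h1; obtain ⟨n2, rfl⟩ := h2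
  exact ⟨n1 + n2, Function.iterate_add_apply par n1 n2 c⟩

variable {ρ : V} (hρ : par ρ = ρ) (hdec : ∀ v, v ≠ ρ → ht (par v) < ht v)

section
include hρ hdec

theorem ht_par_le (v : V) : ht (par v) ≤ ht v := by
  by_cases h : v = ρ
  · subst h; rw [hρ]
  · exact (hdec v h).le

theorem ht_anc_le {w u : V} (h : Anc par w u) : ht w ≤ ht u := by
  obtain ⟨n, rfl⟩ := h
  induction n with
  | zero => exact le_rfl
  | succ n ih =>
      rw [Function.iterate_succ_apply']
      exact (ht_par_le par ht hρ hdec _).trans ih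

theorem anc_eq_of_ht {w u : V} (h : Anc par w u) (hle : ht u ≤ ht w) : w = u := by
  obtain ⟨n, rfl⟩ := h
  match n with
  | 0 => rfl
  | n + 1 =>
      by_cases hu : u = ρ
      · subst hu
        rw [Function.iterate_fixed hρ] at hle ⊢
      · exfalso
        have h1 : ht (par^[n+1] u) ≤ ht (par u) := by
          rw [Function.iterate_succ_apply]
          exact ht_anc_le par ht hρ hdec ⟨n, rfl⟩
        have h2 := hdec u hu
        linarith

theorem anc_root (u : V) : Anc par ρ u := by
  obtain ⟨a, b, hab, heq⟩ := Finite.exists_ne_map_eq_of_infinite (fun n : ℕ => par^[n] u)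
  wlog hlt : a < b generalizing a b
  · exact this b a hab.symm heq.symm (by omega)
  set w := par^[a] u with hw
  have hcyc : par^[b - a] w = w := by
    rw [hw, ← Function.iterate_add_apply]
    rw [show b - a + a = b by omega]
    exact heq.symm
  have hwρ : w = ρ := by
    by_contra hne
    have h1 : ht (par^[b-a] w) ≤ ht (par w) := by
      have : b - a = (b - a - 1) + 1 := by omega
      rw [this, Function.iterate_succ_apply]
      exact ht_anc_le par ht hρ hdec ⟨_, rfl⟩
    rw [hcyc] at h1
    exact absurd (h1.trans_lt (hdec w hne)) (lt_irrefl _)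
  exact ⟨a, hwρ ▸ hw.symm⟩

theorem anc_total {a b u : V} (h1 : Anc par a u) (h2 : Anc par b u) :
    Anc par a b ∨ Anc par b a := by
  obtain ⟨n1, rfl⟩ := h1; obtain ⟨n2, rfl⟩ := h2
  rcases le_total n1 n2 with h | h
  · right
    exact ⟨n2 - n1, by rw [← Function.iterate_add_apply, show n2 - n1 + n1 = n2 by omega]⟩
  · left
    exact ⟨n1 - n2, by rw [← Function.iterate_add_apply, show n1 - n2 + n2 = n1 by omega]⟩

end

open Classical in
/-- the deepest common ancestor. -/
def meet (u w : V) : V :=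
  if h : {a | Anc par a u ∧ Anc par a w}.Nonempty then
    (Set.exists_max_image _ ht (Set.toFinite _) h).choose
  else u

include hρ hdec in
theorem meet_spec (u w : V) :
    (Anc par (meet par ht u w) u ∧ Anc par (meet par ht u w) w) ∧
      ∀ a, Anc par a u → Anc par a w → ht a ≤ ht (meet par ht u w) := by
  have hne : {a | Anc par a u ∧ Anc par a w}.Nonempty :=
    ⟨ρ, anc_root par ht hρ hdec u, anc_root par ht hρ hdec w⟩
  rw [meet]
  rw [dif_pos hne]
  obtain ⟨h1, h2⟩ := (Set.exists_max_image {a | Anc par a u ∧ Anc par a w} ht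
    (Set.toFinite _) hne).choose_spec
  exact ⟨h1, fun a hau haw => h2 a ⟨hau, haw⟩⟩

/-- the tree distance. -/
def dd (u w : V) : ℝ := ht u + ht w - 2 * ht (meet par ht u w)

section
include hρ hdec

theorem mht_comm (u w : V) : ht (meet par ht u w) = ht (meet par ht w u) := by
  obtain ⟨⟨h1, h2⟩, h3⟩ := meet_spec par ht hρ hdec u w
  obtain ⟨⟨h1', h2'⟩, h3'⟩ := meet_spec par ht hρ hdec w u
  exact le_antisymm (h3' _ h2 h1) (h3 _ h2' h1')

theorem dd_comm (u w : V) : dd par ht u w = dd par ht w u := by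
  rw [dd, dd, mht_comm par ht hρ hdec]; ring

theorem mht_le_left (u w : V) : ht (meet par ht u w) ≤ ht u :=
  ht_anc_le par ht hρ hdec (meet_spec par ht hρ hdec u w).1.1

theorem mht_le_right (u w : V) : ht (meet par ht u w) ≤ ht w :=
  ht_anc_le par ht hρ hdec (meet_spec par ht hρ hdec u w).1.2

theorem mht_self (u : V) : ht (meet par ht u u) = ht u :=
  le_antisymm (mht_le_left par ht hρ hdec u u)
    ((meet_spec par ht hρ hdec u u).2 u (anc_refl par u) (anc_refl par u))

theorem dd_self (u : V) : dd par ht u u = 0 := by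
  rw [dd, mht_self par ht hρ hdec]; ring

theorem dd_nonneg (u w : V) : 0 ≤ dd par ht u w := by
  have h1 := mht_le_left par ht hρ hdec u w
  have h2 := mht_le_right par ht hρ hdec u w
  rw [dd]; linarith

theorem dd_eq_zero {u w : V} (h : dd par ht u w = 0) : u = w := by
  have h1 := mht_le_left par ht hρ hdec u w
  have h2 := mht_le_right par ht hρ hdec u w
  have hu : ht u ≤ ht (meet par ht u w) := by rw [dd] at h; linarith
  have hw : ht w ≤ ht (meet par ht u w) := by rw [dd] at h; linarith
  have e1 := anc_eq_of_ht par ht hρ hdec (meet_spec par ht hρ hdec u w).1.1 hu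
  have e2 := anc_eq_of_ht par ht hρ hdec (meet_spec par ht hρ hdec u w).1.2 hw
  exact e1.symm.trans e2

/-- the key 0-hyperbolicity inequality for the Gromov products from the root. -/
theorem mht_hyp (u w z : V) :
    min (ht (meet par ht u z)) (ht (meet par ht z w)) ≤ ht (meet par ht u w) := by
  obtain ⟨⟨ha1, ha2⟩, _⟩ := meet_spec par ht hρ hdec u z
  obtain ⟨⟨hb1, hb2⟩, _⟩ := meet_spec par ht hρ hdec z w
  obtain ⟨_, hmax⟩ := meet_spec par ht hρ hdec u w
  rcases anc_total par ht hρ hdec ha2 hb1 with h | h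
  · -- meet u z is ancestor of meet z w, hence of w
    have : Anc par (meet par ht u z) w := anc_trans par h hb2
    exact (min_le_left _ _).trans (hmax _ ha1 this)
  · have : Anc par (meet par ht z w) u := anc_trans par h ha1
    exact (min_le_right _ _).trans (hmax _ this hb2)

theorem dd_triangle (u z w : V) : dd par ht u w ≤ dd par ht u z + dd par ht z w := by
  have h := mht_hyp par ht hρ hdec u w z
  have h1 := mht_le_left par ht hρ hdec z w
  have h2 := mht_le_right par ht hρ hdec u z
  rcases le_total (ht (meet par ht u z)) (ht (meet par ht z w)) with hc | hc
  · rw [min_eq_left hc] at h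
    rw [dd, dd, dd]; linarith
  · rw [min_eq_right hc] at h
    rw [dd, dd, dd]; linarith

theorem dd_anc {u w : V} (h : Anc par w u) : dd par ht u w = ht u - ht w := by
  have h1 : ht (meet par ht u w) = ht w :=
    le_antisymm (mht_le_right par ht hρ hdec u w)
      ((meet_spec par ht hρ hdec u w).2 w h (anc_refl par w))
  rw [dd, h1]; ring

/-- helper for the four-point condition, assuming `(w|y)` is minimal. -/
theorem fourpt_aux {w x y z : V}
    (h1 : ht (meet par ht w y) ≤ ht (meet par ht x z))
    (h2 : ht (meet par ht w y) ≤ ht (meet par ht w z))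
    (h3 : ht (meet par ht w y) ≤ ht (meet par ht x y)) :
    ht (meet par ht w y) + ht (meet par ht x z) ≤ ht (meet par ht w x) + ht (meet par ht y z) ∨
    ht (meet par ht w z) + ht (meet par ht x y) ≤ ht (meet par ht w x) + ht (meet par ht y z) := by
  have e_yx : ht (meet par ht y x) = ht (meet par ht x y) := mht_comm par ht hρ hdec y x
  have e_zx : ht (meet par ht z x) = ht (meet par ht x z) := mht_comm par ht hρ hdec z x
  have hwx : ht (meet par ht w y) ≤ ht (meet par ht w x) := by
    have h := mht_hyp par ht hρ hdec w x y
    rcases le_total (ht (meet par ht w y)) (ht (meet par ht y x)) with hc | hc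
    · rw [min_eq_left hc] at h; exact h
    · rw [min_eq_right hc] at h; linarith
  have hyz := mht_hyp par ht hρ hdec y z x
  rcases le_total (ht (meet par ht y x)) (ht (meet par ht x z)) with hc | hc
  · -- min = (y|x) = (x|y), so (y|z) ≥ (x|y)
    rw [min_eq_left hc] at hyz
    have hyz' : ht (meet par ht x y) ≤ ht (meet par ht y z) := by linarith
    have hwx2 := mht_hyp par ht hρ hdec w x z
    rcases le_total (ht (meet par ht w z)) (ht (meet par ht z x)) with hc2 | hc2
    · rw [min_eq_left hc2] at hwx2
      right; linarith
    · rw [min_eq_right hc2] at hwx2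
      left; linarith
  · -- min = (z|x) = (x|z), so (y|z) ≥ (x|z)
    rw [min_eq_right hc] at hyz
    left; linarith

theorem mht_four (w x y z : V) :
    min (ht (meet par ht w y) + ht (meet par ht x z))
        (ht (meet par ht w z) + ht (meet par ht x y)) ≤
      ht (meet par ht w x) + ht (meet par ht y z) := by
  have cwx : ht (meet par ht w x) = ht (meet par ht x w) := mht_comm par ht hρ hdec w x
  have cyz : ht (meet par ht y z) = ht (meet par ht z y) := mht_comm par ht hρ hdec y z
  have hmin : (ht (meet par ht w y) ≤ ht (meet par ht x z) ∧
        ht (meet par ht w y) ≤ ht (meet par ht w z) ∧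
        ht (meet par ht w y) ≤ ht (meet par ht x y)) ∨
      (ht (meet par ht x z) ≤ ht (meet par ht w y) ∧
        ht (meet par ht x z) ≤ ht (meet par ht x y) ∧
        ht (meet par ht x z) ≤ ht (meet par ht w z)) ∨
      (ht (meet par ht w z) ≤ ht (meet par ht x y) ∧
        ht (meet par ht w z) ≤ ht (meet par ht w y) ∧
        ht (meet par ht w z) ≤ ht (meet par ht x z)) ∨
      (ht (meet par ht x y) ≤ ht (meet par ht w z) ∧
        ht (meet par ht x y) ≤ ht (meet par ht x z) ∧
        ht (meet par ht x y) ≤ ht (meet par ht w y)) := by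
    rcases le_total (ht (meet par ht w y)) (ht (meet par ht x z)) with h1 | h1 <;>
      rcases le_total (ht (meet par ht w y)) (ht (meet par ht w z)) with h2 | h2 <;>
      rcases le_total (ht (meet par ht w y)) (ht (meet par ht x y)) with h3 | h3 <;>
      rcases le_total (ht (meet par ht x z)) (ht (meet par ht w z)) with h4 | h4 <;>
      rcases le_total (ht (meet par ht x z)) (ht (meet par ht x y)) with h5 | h5 <;>
      rcases le_total (ht (meet par ht w z)) (ht (meet par ht x y)) with h6 | h6 <;>
      first
        | exact Or.inl ⟨by linarith, by linarith, by linarith⟩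
        | exact Or.inr (Or.inl ⟨by linarith, by linarith, by linarith⟩)
        | exact Or.inr (Or.inr (Or.inl ⟨by linarith, by linarith, by linarith⟩))
        | exact Or.inr (Or.inr (Or.inr ⟨by linarith, by linarith, by linarith⟩))
  rcases hmin with ⟨h1, h2, h3⟩ | ⟨h1, h2, h3⟩ | ⟨h1, h2, h3⟩ | ⟨h1, h2, h3⟩
  · rcases fourpt_aux par ht hρ hdec h1 h2 h3 with h | h
    · exact min_le_of_left_le (by linarith)
    · exact min_le_of_right_le (by linarith)
  · rcases fourpt_aux par ht hρ hdec (w := x) (x := w) (y := z) (z := y) h1 h2 h3 with h | h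
    · exact min_le_of_left_le (by linarith)
    · exact min_le_of_right_le (by linarith)
  · rcases fourpt_aux par ht hρ hdec (w := w) (x := x) (y := z) (z := y) h1 h2 h3 with h | h
    · exact min_le_of_right_le (by linarith)
    · exact min_le_of_left_le (by linarith)
  · rcases fourpt_aux par ht hρ hdec (w := x) (x := w) (y := y) (z := z) h1 h2 h3 with h | h
    · exact min_le_of_right_le (by linarith)
    · exact min_le_of_left_le (by linarith)

theorem dd_four (w x y z : V) :
    dd par ht w x + dd par ht y z ≤
      max (dd par ht w y + dd par ht x z) (dd par ht w z + dd par ht x y) := by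
  have h := mht_four par ht hρ hdec w x y z
  rcases le_total (ht (meet par ht w y) + ht (meet par ht x z))
      (ht (meet par ht w z) + ht (meet par ht x y)) with hc | hc
  · rw [min_eq_left hc] at h
    refine le_trans ?_ (le_max_left _ _)
    simp only [dd]; linarith
  · rw [min_eq_right hc] at h
    refine le_trans ?_ (le_max_right _ _)
    simp only [dd]; linarith

end

/-- the metric space obtained from the parent structure. -/
def treeMetric {V : Type} [Finite V] (par : V → V) (ht : V → ℝ) {ρ : V} (hρ : par ρ = ρ)
    (hdec : ∀ v, v ≠ ρ → ht (par v) < ht v) : MetricSpace V where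
  dist := dd par ht
  dist_self := dd_self par ht hρ hdec
  dist_comm := dd_comm par ht hρ hdec
  dist_triangle x y z := dd_triangle par ht hρ hdec x y z
  eq_of_dist_eq_zero := dd_eq_zero par ht hρ hdec

end TreeGen


namespace S5

open Classical

/-- encoding of scales into `Fin (m+1)`. -/
def eF (m i : ℕ) : Fin (m + 1) := ⟨min i m, by omega⟩

variable {k : ℕ} (hk : 0 < k) (r : X) (P : Fin k → Set X) (σ : Equiv.Perm (Fin k))
  (α β : ℝ) (m : ℕ)

/-- cluster of a history (most recent choice first). -/
def cl : List (Fin k × ℕ) → Set X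
  | [] => Set.univ
  | (s, j) :: h => vchild r P σ α β (cl h) (m - (h.length + 1)) s j

/-- trunk index of a history. -/
def trunkIdx : List (Fin k × ℕ) → Fin k
  | [] => ⟨0, hk⟩
  | (s, _) :: _ => s

/-- a good history. -/
def Ok (h : List (Fin k × ℕ)) : Prop := h.length ≤ m ∧ (cl r P σ α β m h).Nonempty

/-- the point of `D` closest to `r`. -/
def minSt (D : Set X) : X :=
  if hD : D.Nonempty then (Set.exists_min_image D (dist r) D.toFinite hD).choose else r

/-- the point of `D` strictly below `v` (w.r.t. distance from `r`) farthest from `r`. -/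
def predSt (D : Set X) (v : X) : X :=
  if hD : {u ∈ D | dist r u < dist r v}.Nonempty then
    (Set.exists_max_image _ (dist r) (Set.toFinite _) hD).choose else r

/-- encoded branch identifiers. -/
def mkB (i : ℕ) (A : Set X) (s : Fin k) : Option (Fin (m + 1) × Set X × Fin k) :=
  some (eF m i, A, s)

/-- the branch in which the stem of the cluster of a history lives. -/
def brhE : List (Fin k × ℕ) → Option (Fin (m + 1) × Set X × Fin k)
  | [] => none
  | (s, _) :: h =>
      if s = trunkIdx hk h then brhE h else mkB m (m - (h.length + 1)) (cl r P σ α β m h) s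

/-- the vertex set (in `X`) of a branch. -/
def SB : Option (Fin (m + 1) × Set X × Fin k) → Set X
  | none => stemDom r P Set.univ (σ ⟨0, hk⟩)
  | some (iF, A, s) => stemDom r P (hchild P σ β A iF.val s) (σ s)

/-- path index of a branch. -/
def pidx : Option (Fin (m + 1) × Set X × Fin k) → Fin k
  | none => ⟨0, hk⟩
  | some (_, _, s) => s

/-- the unique good history of a given cluster at a given level. -/
def histOf (n : ℕ) (A : Set X) : List (Fin k × ℕ) :=
  if h : ∃ hh : List (Fin k × ℕ), Ok r P σ α β m hh ∧ hh.length = n ∧ cl r P σ α β m hh = A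
  then h.choose else []

/-- height offsets of branches, via creating histories. -/
def off : List (Fin k × ℕ) → ℝ
  | [] => 0
  | (s, _) :: h =>
      if s = trunkIdx hk h then off h
      else
        (if (hchild P σ β (cl r P σ α β m h) (m - (h.length + 1)) (trunkIdx hk h)).Nonempty ∧
            (stemDom r P (hchild P σ β (cl r P σ α β m h) (m - (h.length + 1)) (trunkIdx hk h))
              (σ (trunkIdx hk h))).Nonempty
         then off h + dist r (minSt r (stemDom r P
            (hchild P σ β (cl r P σ α β m h) (m - (h.length + 1)) (trunkIdx hk h))
            (σ (trunkIdx hk h))))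
         else 1)
        + 2 ^ (m - h.length)
        - dist r (minSt r (stemDom r P (hchild P σ β (cl r P σ α β m h) (m - (h.length + 1)) s)
            (σ s)))

/-- height offset of an encoded branch. -/
def offB : Option (Fin (m + 1) × Set X × Fin k) → ℝ
  | none => 0
  | some (iF, A, s) => off hk r P σ α β m ((s, 0) :: histOf r P σ α β m (m - (iF.val + 1)) A)

/-- the height of the attachment point (root of trunk child) below a cluster `A` of
`C (i+1)`. -/
def tAv (i : ℕ) (A : Set X) : ℝ :=
  if (hchild P σ β A i (trunkIdx hk (histOf r P σ α β m (m - (i + 1)) A))).Nonempty ∧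
      (stemDom r P (hchild P σ β A i (trunkIdx hk (histOf r P σ α β m (m - (i + 1)) A)))
        (σ (trunkIdx hk (histOf r P σ α β m (m - (i + 1)) A)))).Nonempty
  then offB hk r P σ α β m (brhE hk r P σ α β m (histOf r P σ α β m (m - (i + 1)) A)) +
    dist r (minSt r (stemDom r P
      (hchild P σ β A i (trunkIdx hk (histOf r P σ α β m (m - (i + 1)) A)))
      (σ (trunkIdx hk (histOf r P σ α β m (m - (i + 1)) A)))))
  else 1

/-- the carrier of the tree. -/
abbrev CT (X : Type) (k m : ℕ) : Type :=
  (Option (Fin (m + 1) × Set X × Fin k) × X) ⊕ (X ⊕ (Fin (m + 1) × Set X × Fin k))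

instance : Finite (CT X k m) := by unfold CT; infer_instance

/-- the root vertex. -/
def rootV : CT X k m := Sum.inl (none, r)

/-- the attachment point below a cluster `A` of `C (i+1)`. -/
def attachT (i : ℕ) (A : Set X) : CT X k m :=
  if (hchild P σ β A i (trunkIdx hk (histOf r P σ α β m (m - (i + 1)) A))).Nonempty ∧
      (stemDom r P (hchild P σ β A i (trunkIdx hk (histOf r P σ α β m (m - (i + 1)) A)))
        (σ (trunkIdx hk (histOf r P σ α β m (m - (i + 1)) A)))).Nonempty
  then Sum.inl (brhE hk r P σ α β m (histOf r P σ α β m (m - (i + 1)) A),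
    minSt r (stemDom r P
      (hchild P σ β A i (trunkIdx hk (histOf r P σ α β m (m - (i + 1)) A)))
      (σ (trunkIdx hk (histOf r P σ α β m (m - (i + 1)) A)))))
  else Sum.inr (Sum.inr (eF m i, A, trunkIdx hk (histOf r P σ α β m (m - (i + 1)) A)))

/-- validity of an encoded branch. -/
def ValidB : Option (Fin (m + 1) × Set X × Fin k) → Prop
  | none => True
  | some (iF, A, s) => ∃ h : List (Fin k × ℕ), Ok r P σ α β m h ∧
      h.length + (iF.val + 1) = m ∧ cl r P σ α β m h = A ∧ s ≠ trunkIdx hk h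

/-- validity of an anchor index. -/
def AnchorOk (iF : Fin (m + 1)) (A : Set X) : Prop :=
  ∃ h : List (Fin k × ℕ), Ok r P σ α β m h ∧ h.length + (iF.val + 1) = m ∧ cl r P σ α β m h = A

/-- the parent map of the tree. -/
def parV : CT X k m → CT X k m
  | Sum.inl (b, v) =>
      if ValidB hk r P σ α β m b ∧ v ∈ SB hk r P σ β m b then
        if v = minSt r (SB hk r P σ β m b) then
          match b with
          | none => rootV r m
          | some (iF, A, _) => attachT hk r P σ α β m iF.val A
        else Sum.inl (b, predSt r (SB hk r P σ β m b) v)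
      else rootV r m
  | Sum.inr (Sum.inl _) => rootV r m
  | Sum.inr (Sum.inr (iF, A, s)) =>
      if AnchorOk r P σ α β m iF A ∧
          s ≠ trunkIdx hk (histOf r P σ α β m (m - (iF.val + 1)) A) then
        attachT hk r P σ α β m iF.val A
      else rootV r m

/-- the height function of the tree. -/
def htV : CT X k m → ℝ
  | Sum.inl (b, v) =>
      if ValidB hk r P σ α β m b ∧ v ∈ SB hk r P σ β m b
      then offB hk r P σ α β m b + dist r v else 1
  | Sum.inr (Sum.inl _) => 1
  | Sum.inr (Sum.inr (iF, A, s)) =>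
      if AnchorOk r P σ α β m iF A ∧
          s ≠ trunkIdx hk (histOf r P σ α β m (m - (iF.val + 1)) A) then
        tAv hk r P σ α β m iF.val A + 2 ^ (iF.val + 1)
      else 1

/-- the stem map. -/
def stemV (i : ℕ) (A : Set X) (_ : Fin k) (v : X) : CT X k m :=
  Sum.inl (brhE hk r P σ α β m (histOf r P σ α β m (m - i) A), v)

/-- the history of the parent cluster of a horizontal child. -/
def pHist (i : ℕ) (Q : Set X) (l : Fin k) : List (Fin k × ℕ) :=
  if h : ∃ hh : List (Fin k × ℕ), Ok r P σ α β m hh ∧ hh.length + (i + 1) = m ∧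
      hchild P σ β (cl r P σ α β m hh) i (σ.symm l) = Q
  then h.choose else []

/-- the hstem map. -/
def hstemV (i : ℕ) (Q : Set X) (l : Fin k) (v : X) : CT X k m :=
  Sum.inl (brhE hk r P σ α β m ((σ.symm l, 0) :: pHist r P σ α β m i Q l), v)

/-- the hroot map. -/
def hrootV (i : ℕ) (Q : Set X) (l : Fin k) : CT X k m :=
  if (stemDom r P Q l).Nonempty then
    hstemV hk r P σ α β m i Q l (minSt r (stemDom r P Q l))
  else Sum.inr (Sum.inr (eF m i, cl r P σ α β m (pHist r P σ α β m i Q l), σ.symm l))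

/-- the injection of the points. -/
def fV (x : X) : CT X k m :=
  if hx : ∃ h : List (Fin k × ℕ), Ok r P σ α β m h ∧ h.length = m ∧ x ∈ cl r P σ α β m h ∧
      (stemDom r P (cl r P σ α β m h) (σ (trunkIdx hk h))).Nonempty
  then stemV hk r P σ α β m 0 (cl r P σ α β m hx.choose) (σ (trunkIdx hk hx.choose))
    (minSt r (stemDom r P (cl r P σ α β m hx.choose) (σ (trunkIdx hk hx.choose))))
  else Sum.inr (Sum.inl x)

/-! ### Basic partition lemmas -/

theorem vchild_subset (A : Set X) (i : ℕ) (s : Fin k) (j : ℕ) :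
    vchild r P σ α β A i s j ⊆ hchild P σ β A i s := fun x hx => hx.1

theorem hchild_subset (A : Set X) (i : ℕ) (s : Fin k) :
    hchild P σ β A i s ⊆ A := fun x hx => hx.1.1

theorem hchild_subset_nbr (A : Set X) (i : ℕ) (s : Fin k) :
    hchild P σ β A i s ⊆ nbr (P (σ s)) (β * (2 ^ i / 4)) := fun x hx => hx.1.2

theorem cl_cons_subset (h : List (Fin k × ℕ)) (s : Fin k) (j : ℕ) :
    cl r P σ α β m ((s, j) :: h) ⊆ cl r P σ α β m h := fun x hx =>
  hchild_subset P σ β _ _ _ (vchild_subset r P σ α β _ _ _ _ hx)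

theorem hchild_disjoint (A : Set X) (i : ℕ) {s s' : Fin k} (hss : s ≠ s') {x : X}
    (hx : x ∈ hchild P σ β A i s) (hx' : x ∈ hchild P σ β A i s') : False := by
  rcases lt_or_gt_of_ne hss with hlt | hlt
  · exact hx'.2 (Set.mem_iUnion.2 ⟨s, Set.mem_iUnion.2 ⟨hlt, hx.1⟩⟩)
  · exact hx.2 (Set.mem_iUnion.2 ⟨s', Set.mem_iUnion.2 ⟨hlt, hx'.1⟩⟩)

theorem vchild_disjoint (hα : α ∈ Set.Ico (0 : ℝ) 1) (A : Set X) (i : ℕ) (s : Fin k)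
    {j j' : ℕ} (hjj : j ≠ j') {x : X}
    (hx : x ∈ vchild r P σ α β A i s j) (hx' : x ∈ vchild r P σ α β A i s j') : False := by
  have hu : (0 : ℝ) < 2 ^ i / 4 := by positivity
  obtain ⟨_, hx1, hx2⟩ := hx
  obtain ⟨_, hx1', hx2'⟩ := hx'
  rcases Nat.lt_or_ge j j' with hlt | hge
  · have hj : (j : ℝ) + α ≤ (j' : ℝ) - 1 + α := by
      have : (j : ℝ) + 1 ≤ (j' : ℝ) := by exact_mod_cast hlt
      linarith
    have := mul_le_mul_of_nonneg_right hj hu.le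
    linarith
  · have hlt : j' < j := by omega
    have hj : (j' : ℝ) + α ≤ (j : ℝ) - 1 + α := by
      have : (j' : ℝ) + 1 ≤ (j : ℝ) := by exact_mod_cast (by omega : j' + 1 ≤ j)
      linarith
    have := mul_le_mul_of_nonneg_right hj hu.le
    linarith

theorem cl_inj (hα : α ∈ Set.Ico (0 : ℝ) 1) :
    ∀ (h h' : List (Fin k × ℕ)), Ok r P σ α β m h → Ok r P σ α β m h' →
      h.length = h'.length → (cl r P σ α β m h ∩ cl r P σ α β m h').Nonempty → h = h'
  | [], [], _, _, _, _ => rfl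
  | (s, j) :: h, (s', j') :: h', ⟨hl, _⟩, ⟨hl', _⟩, hlen, ⟨x, hx, hx'⟩ => by
    have hlen' : h.length = h'.length := by simpa using hlen
    have htl : h = h' := by
      apply cl_inj hα h h'
      · exact ⟨by simpa using Nat.le_of_succ_le hl, ⟨x, cl_cons_subset r P σ α β m h s j hx⟩⟩
      · exact ⟨by simpa using Nat.le_of_succ_le hl', ⟨x, cl_cons_subset r P σ α β m h' s' j' hx'⟩⟩
      · exact hlen'
      · exact ⟨x, cl_cons_subset r P σ α β m h s j hx, cl_cons_subset r P σ α β m h' s' j' hx'⟩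
    subst htl
    have hs : s = s' := by
      by_contra hss
      exact hchild_disjoint P σ β _ _ hss (vchild_subset r P σ α β _ _ _ _ hx)
        (vchild_subset r P σ α β _ _ _ _ hx')
    subst hs
    have hj : j = j' := by
      by_contra hjj
      exact vchild_disjoint r P σ α β hα _ _ _ hjj hx hx'
    subst hj
    rfl

theorem histOf_eq (hα : α ∈ Set.Ico (0 : ℝ) 1) {h : List (Fin k × ℕ)} {n : ℕ} {A : Set X}
    (hOk : Ok r P σ α β m h) (hn : h.length = n) (hA : cl r P σ α β m h = A) :
    histOf r P σ α β m n A = h := by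
  have hex : ∃ hh : List (Fin k × ℕ), Ok r P σ α β m hh ∧ hh.length = n ∧
      cl r P σ α β m hh = A := ⟨h, hOk, hn, hA⟩
  rw [histOf, dif_pos hex]
  obtain ⟨h1, h2, h3⟩ := hex.choose_spec
  refine cl_inj r P σ α β m hα _ _ h1 hOk (by rw [h2, hn]) ?_
  rw [h3, ← hA, Set.inter_self]
  exact hOk.2

/-- characterization of the partitions by histories. -/
theorem partsTAux_char (n : ℕ) (A : Set X) (l : Fin k) :
    (A, l) ∈ partsTAux hk r P σ α β m n ↔
      ∃ h : List (Fin k × ℕ), h.length = n ∧ cl r P σ α β m h = A ∧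
        σ (trunkIdx hk h) = l ∧ A.Nonempty := by
  induction n generalizing A l with
  | zero =>
      constructor
      · intro hmem
        simp only [partsTAux, Set.mem_singleton_iff, Prod.ext_iff] at hmem
        obtain ⟨h1, h2⟩ := hmem
        exact ⟨[], rfl, by simp [cl, h1], by simp [trunkIdx, h2], by
          rw [h1]; exact ⟨r, Set.mem_univ r⟩⟩
      · rintro ⟨h, hlen, hcl, htr, -⟩
        have : h = [] := List.length_eq_zero_iff.1 hlen
        subst this
        simp only [partsTAux, Set.mem_singleton_iff]
        rw [← hcl, ← htr]
        simp [cl, trunkIdx]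
  | succ n ih =>
      constructor
      · rintro ⟨hne, A₀, ⟨l₀, hA₀⟩, s, j, hA, hl⟩
        obtain ⟨h₀, hlen₀, hcl₀, htr₀, hne₀⟩ := (ih A₀ l₀).1 hA₀
        refine ⟨(s, j) :: h₀, by simp [hlen₀], ?_, by simp only [trunkIdx]; exact hl.symm, hne⟩
        simp only [cl, hcl₀, hlen₀]
        exact hA.symm
      · rintro ⟨h, hlen, hcl, htr, hne⟩
        match h with
        | (s, j) :: h₀ =>
          have hlen₀ : h₀.length = n := by simpa using hlen
          refine ⟨hcl ▸ hne, cl r P σ α β m h₀, ⟨σ (trunkIdx hk h₀), (ih _ _).2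
            ⟨h₀, hlen₀, rfl, rfl, ?_⟩⟩, s, j, ?_, ?_⟩
          · exact ⟨_, cl_cons_subset r P σ α β m h₀ s j (hcl ▸ hne).choose_spec⟩
          · rw [← hcl]; simp [cl, hlen₀]
          · simpa [trunkIdx] using htr.symm

theorem partsT_char (i : ℕ) (A : Set X) (l : Fin k) :
    (A, l) ∈ partsT hk r P σ α β m i ↔
      ∃ h : List (Fin k × ℕ), h.length = m - i ∧ cl r P σ α β m h = A ∧
        σ (trunkIdx hk h) = l ∧ A.Nonempty :=
  partsTAux_char hk r P σ α β m (m - i) A l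

/-! ### stemDom and minimizer lemmas -/

theorem stemDom_subset_path (Q : Set X) (l : Fin k) : stemDom r P Q l ⊆ P l :=
  fun _ hv => hv.1

theorem stemDom_mono {Q Q' : Set X} (hQ : Q.Nonempty) (hsub : Q ⊆ Q') (l : Fin k) :
    stemDom r P Q l ⊆ stemDom r P Q' l := by
  rintro v ⟨hv1, hv2, hv3⟩
  refine ⟨hv1, le_trans ?_ hv2, le_trans hv3 ?_⟩
  · exact csInf_le_csInf (Set.Finite.bddBelow (Set.toFinite _)) (hQ.image _)
      (Set.image_mono hsub)
  · exact csSup_le_csSup (Set.Finite.bddAbove (Set.toFinite _)) (hQ.image _)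
      (Set.image_mono hsub)

theorem r_mem_stem_univ (hr : ∀ s, r ∈ P s) :
    r ∈ stemDom r P (Set.univ : Set X) (σ ⟨0, hk⟩) := by
  refine ⟨hr _, ?_, ?_⟩
  · exact csInf_le (Set.Finite.bddBelow (Set.toFinite _)) ⟨r, Set.mem_univ r, rfl⟩
  · exact le_csSup (Set.Finite.bddAbove (Set.toFinite _)) ⟨r, Set.mem_univ r, rfl⟩

theorem minSt_mem {D : Set X} (hD : D.Nonempty) : minSt r D ∈ D := by
  rw [minSt, dif_pos hD]
  exact (Set.exists_min_image D (dist r) D.toFinite hD).choose_spec.1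

theorem minSt_min {D : Set X} (hD : D.Nonempty) : ∀ u ∈ D, dist r (minSt r D) ≤ dist r u := by
  rw [minSt, dif_pos hD]
  exact (Set.exists_min_image D (dist r) D.toFinite hD).choose_spec.2

theorem predSt_mem {D : Set X} {v : X} (hD : {u ∈ D | dist r u < dist r v}.Nonempty) :
    predSt r D v ∈ D ∧ dist r (predSt r D v) < dist r v := by
  rw [predSt, dif_pos hD]
  exact (Set.exists_max_image _ (dist r) (Set.toFinite _) hD).choose_spec.1

theorem predSt_max {D : Set X} {v : X} (hD : {u ∈ D | dist r u < dist r v}.Nonempty) :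
    ∀ u ∈ D, dist r u < dist r v → dist r u ≤ dist r (predSt r D v) := by
  rw [predSt, dif_pos hD]
  intro u hu hlt
  exact (Set.exists_max_image _ (dist r) (Set.toFinite _) hD).choose_spec.2 u ⟨hu, hlt⟩

theorem path_eq_of_dist (hpath : ∀ s, ∀ x ∈ P s, ∀ y ∈ P s, dist x y = |dist r x - dist r y|)
    {l : Fin k} {v w : X} (hv : v ∈ P l) (hw : w ∈ P l) (h : dist r v = dist r w) : v = w := by
  have := hpath l v hv w hw
  rw [h, sub_self, abs_zero] at this
  exact dist_eq_zero.1 this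

theorem minSt_univ_eq_r (hr : ∀ s, r ∈ P s) :
    minSt r (stemDom r P (Set.univ : Set X) (σ ⟨0, hk⟩)) = r := by
  have hmem := r_mem_stem_univ hk r P σ hr
  have h1 := minSt_min r (D := stemDom r P (Set.univ : Set X) (σ ⟨0, hk⟩)) ⟨r, hmem⟩ r hmem
  rw [dist_self] at h1
  exact (dist_eq_zero.1 (le_antisymm h1 dist_nonneg)).symm

/-! ### branch lemmas -/

theorem SB_mkB {i : ℕ} (hi : i < m) (A : Set X) (s : Fin k) :
    SB hk r P σ β m (mkB m i A s) = stemDom r P (hchild P σ β A i s) (σ s) := by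
  simp only [SB, mkB, eF, Nat.min_eq_left hi.le]

theorem Ok_tail {h : List (Fin k × ℕ)} {p : Fin k × ℕ} (hOk : Ok r P σ α β m (p :: h)) :
    Ok r P σ α β m h :=
  ⟨Nat.le_of_succ_le (by simpa using hOk.1),
    hOk.2.mono (by rcases p with ⟨s, j⟩; exact cl_cons_subset r P σ α β m h s j)⟩

theorem stemDom_sub_brhE :
    ∀ h : List (Fin k × ℕ), Ok r P σ α β m h →
      stemDom r P (cl r P σ α β m h) (σ (trunkIdx hk h)) ⊆ SB hk r P σ β m
        (brhE hk r P σ α β m h)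
  | [] => fun _ => by
      simp only [cl, trunkIdx, brhE, SB]
      exact fun v hv => hv
  | (s, j) :: h => fun hOk => by
      have hOkt := Ok_tail r P σ α β m hOk
      simp only [brhE]
      by_cases hs : s = trunkIdx hk h
      · rw [if_pos hs]
        refine subset_trans ?_ (stemDom_sub_brhE h hOkt)
        have : σ (trunkIdx hk ((s, j) :: h)) = σ (trunkIdx hk h) := by
          rw [show trunkIdx hk ((s, j) :: h) = s from rfl, hs]
        rw [this]
        exact stemDom_mono r P hOk.2 (cl_cons_subset r P σ α β m h s j) _
      · rw [if_neg hs]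
        have hi : m - (h.length + 1) < m := by
          have : h.length + 1 ≤ m := by simpa using hOk.1
          omega
        rw [SB_mkB hk r P σ β m hi]
        simp only [trunkIdx]
        exact stemDom_mono r P hOk.2 (vchild_subset r P σ α β _ _ _ _) _

theorem brhE_valid : ∀ h : List (Fin k × ℕ), Ok r P σ α β m h →
    ValidB hk r P σ α β m (brhE hk r P σ α β m h)
  | [] => fun _ => trivial
  | (s, j) :: h => fun hOk => by
      have hOkt := Ok_tail r P σ α β m hOk
      simp only [brhE]
      by_cases hs : s = trunkIdx hk h
      · rw [if_pos hs]; exact brhE_valid h hOkt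
      · rw [if_neg hs]
        have hlen : h.length + 1 ≤ m := by simpa using hOk.1
        refine ⟨h, hOkt, ?_, rfl, hs⟩
        simp only [mkB, eF]
        have : min (m - (h.length + 1)) m = m - (h.length + 1) := by omega
        rw [this]
        omega

theorem off_eq (hα : α ∈ Set.Ico (0 : ℝ) 1) :
    ∀ h : List (Fin k × ℕ), Ok r P σ α β m h →
      off hk r P σ α β m h = offB hk r P σ α β m (brhE hk r P σ α β m h)
  | [] => fun _ => by simp [off, brhE, offB]
  | (s, j) :: h => fun hOk => by
      have hOkt := Ok_tail r P σ α β m hOk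
      by_cases hs : s = trunkIdx hk h
      · simp only [off, brhE, if_pos hs]
        exact off_eq hα h hOkt
      · have hlen : h.length + 1 ≤ m := by simpa using hOk.1
        simp only [brhE, if_neg hs, offB, mkB]
        have hval : (eF m (m - (h.length + 1))).val = m - (h.length + 1) := by
          simp only [eF]; omega
        rw [hval]
        have harg : m - (m - (h.length + 1) + 1) = h.length := by omega
        rw [harg, histOf_eq r P σ α β m hα hOkt rfl rfl]
        simp only [off, if_neg hs]

theorem off_cons (hα : α ∈ Set.Ico (0 : ℝ) 1) {h : List (Fin k × ℕ)}
    (hOk : Ok r P σ α β m h) {s : Fin k} (hs : s ≠ trunkIdx hk h) {i : ℕ}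
    (hi : h.length + (i + 1) = m) (j : ℕ) :
    off hk r P σ α β m ((s, j) :: h) =
      tAv hk r P σ α β m i (cl r P σ α β m h) + 2 ^ (i + 1) -
        dist r (minSt r (stemDom r P (hchild P σ β (cl r P σ α β m h) i s) (σ s))) := by
  have h1 : m - (h.length + 1) = i := by omega
  have h2 : m - h.length = i + 1 := by omega
  have h3 : histOf r P σ α β m (m - (i + 1)) (cl r P σ α β m h) = h :=
    histOf_eq r P σ α β m hα hOk (by omega) rfl
  simp only [off, if_neg hs, h1, h2, tAv, h3]
  rw [off_eq hk r P σ α β m hα h hOk]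

theorem offB_mkB (hα : α ∈ Set.Ico (0 : ℝ) 1) {h : List (Fin k × ℕ)}
    (hOk : Ok r P σ α β m h) {i : ℕ} (hi : h.length + (i + 1) = m) (s : Fin k) :
    offB hk r P σ α β m (mkB m i (cl r P σ α β m h) s) =
      off hk r P σ α β m ((s, 0) :: h) := by
  have hval : (eF m i).val = i := by simp only [eF]; omega
  simp only [offB, mkB, hval]
  rw [show m - (i + 1) = h.length by omega, histOf_eq r P σ α β m hα hOk rfl rfl]

theorem attachT_ht (hα : α ∈ Set.Ico (0 : ℝ) 1) {i : ℕ} {A : Set X}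
    {h : List (Fin k × ℕ)} (hOk : Ok r P σ α β m h) (hlen : h.length + (i + 1) = m)
    (hclh : cl r P σ α β m h = A) :
    htV hk r P σ α β m (attachT hk r P σ α β m i A) = tAv hk r P σ α β m i A := by
  have h3 : histOf r P σ α β m (m - (i + 1)) A = h :=
    histOf_eq r P σ α β m hα hOk (by omega) hclh
  rw [attachT, tAv, h3]
  by_cases hg : (hchild P σ β A i (trunkIdx hk h)).Nonempty ∧
      (stemDom r P (hchild P σ β A i (trunkIdx hk h)) (σ (trunkIdx hk h))).Nonempty
  · rw [if_pos hg, if_pos hg]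
    have hvmem : minSt r (stemDom r P (hchild P σ β A i (trunkIdx hk h))
        (σ (trunkIdx hk h))) ∈ SB hk r P σ β m (brhE hk r P σ α β m h) := by
      apply stemDom_sub_brhE hk r P σ α β m h hOk
      refine stemDom_mono r P hg.1 ?_ _ (minSt_mem r hg.2)
      rw [← hclh]; exact hchild_subset P σ β _ _ _
    simp only [htV]
    rw [if_pos ⟨brhE_valid hk r P σ α β m h hOk, hvmem⟩]
  · rw [if_neg hg, if_neg hg]
    simp only [htV]
    have hval : (eF m i).val = i := by simp only [eF]; omega
    rw [if_neg]
    rintro ⟨-, hne⟩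
    rw [hval, h3] at hne
    exact hne rfl

/-! ### the parent map dynamics -/

theorem SB_sub_path (b : Option (Fin (m + 1) × Set X × Fin k)) :
    SB hk r P σ β m b ⊆ P (σ (pidx hk m b)) := by
  match b with
  | none => exact stemDom_subset_path r P _ _
  | some (iF, A, s) => exact stemDom_subset_path r P _ _

theorem minSt_lt (hpath : ∀ s, ∀ x ∈ P s, ∀ y ∈ P s, dist x y = |dist r x - dist r y|)
    {b : Option (Fin (m + 1) × Set X × Fin k)} {v : X} (hv : v ∈ SB hk r P σ β m b)
    (hne : v ≠ minSt r (SB hk r P σ β m b)) :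
    dist r (minSt r (SB hk r P σ β m b)) < dist r v := by
  have hDne : (SB hk r P σ β m b).Nonempty := ⟨v, hv⟩
  rcases lt_or_eq_of_le (minSt_min r hDne v hv) with h | h
  · exact h
  · exact absurd (path_eq_of_dist r P hpath (SB_sub_path hk r P σ β m b hv)
      (SB_sub_path hk r P σ β m b (minSt_mem r hDne)) h.symm) hne

theorem parV_root (hr : ∀ s, r ∈ P s) :
    parV hk r P σ α β m (rootV r m) = rootV r m := by
  have hmem : r ∈ SB hk r P σ β m none := r_mem_stem_univ hk r P σ hr
  simp only [rootV, parV]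
  rw [if_pos ⟨trivial, hmem⟩, if_pos]
  exact (minSt_univ_eq_r hk r P σ hr).symm

theorem htV_root (hr : ∀ s, r ∈ P s) : htV hk r P σ α β m (rootV r m) = 0 := by
  have hmem : r ∈ SB hk r P σ β m none := r_mem_stem_univ hk r P σ hr
  simp only [rootV, htV]
  rw [if_pos ⟨trivial, hmem⟩]
  simp [offB, dist_self]

theorem htV_dec (hα : α ∈ Set.Ico (0 : ℝ) 1) (hr : ∀ s, r ∈ P s)
    (hpath : ∀ s, ∀ x ∈ P s, ∀ y ∈ P s, dist x y = |dist r x - dist r y|) :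
    ∀ u : CT X k m, u ≠ rootV r m →
      htV hk r P σ α β m (parV hk r P σ α β m u) < htV hk r P σ α β m u := by
  have hroot0 : htV hk r P σ α β m (rootV r m) = 0 := htV_root hk r P σ α β m hr
  rintro (⟨b, v⟩ | x | ⟨iF, A, s⟩) hne
  · by_cases hval : ValidB hk r P σ α β m b ∧ v ∈ SB hk r P σ β m b
    · by_cases hminv : v = minSt r (SB hk r P σ β m b)
      · match b, hval with
        | none, hval =>
            exfalso
            apply hne
            rw [hminv]
            have : minSt r (SB hk r P σ β m none) = r := by
              simp only [SB]
              exact minSt_univ_eq_r hk r P σ hr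
            rw [this]
            rfl
        | some (iF, A, s), hval =>
            obtain ⟨h, hOk, hlen, hclA, hs⟩ := hval.1
            have hpar : parV hk r P σ α β m (Sum.inl (some (iF, A, s), v)) =
                attachT hk r P σ α β m iF.val A := by
              simp only [parV]
              rw [if_pos hval, if_pos hminv]
            rw [hpar, attachT_ht hk r P σ α β m hα hOk hlen hclA]
            have hhist : histOf r P σ α β m (m - (iF.val + 1)) A = h :=
              histOf_eq r P σ α β m hα hOk (by omega) hclA
            have hoff : offB hk r P σ α β m (some (iF, A, s)) =
                tAv hk r P σ α β m iF.val A + 2 ^ (iF.val + 1) -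
                  dist r (minSt r (SB hk r P σ β m (some (iF, A, s)))) := by
              simp only [offB, hhist]
              rw [off_cons hk r P σ α β m hα hOk hs hlen 0, hclA]
              simp only [SB]
            have : htV hk r P σ α β m (Sum.inl ((some (iF, A, s) :
                Option (Fin (m+1) × Set X × Fin k)), v)) =
                tAv hk r P σ α β m iF.val A + 2 ^ (iF.val + 1) := by
              simp only [htV]
              rw [if_pos hval, hoff, ← hminv]
              ring
            rw [this]
            have : (0:ℝ) < 2 ^ (iF.val + 1) := by positivity
            linarith
      · have hD : {u ∈ SB hk r P σ β m b | dist r u < dist r v}.Nonempty :=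
          ⟨minSt r (SB hk r P σ β m b), minSt_mem r ⟨v, hval.2⟩,
            minSt_lt hk r P σ β m hpath hval.2 hminv⟩
        have hpar : parV hk r P σ α β m (Sum.inl (b, v)) =
            Sum.inl (b, predSt r (SB hk r P σ β m b) v) := by
          simp only [parV]
          rw [if_pos hval, if_neg hminv]
        obtain ⟨hpmem, hplt⟩ := predSt_mem r hD
        rw [hpar]
        simp only [htV]
        rw [if_pos hval, if_pos ⟨hval.1, hpmem⟩]
        linarith
    · have hpar : parV hk r P σ α β m (Sum.inl (b, v)) = rootV r m := by
        simp only [parV]; rw [if_neg hval]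
      have hht : htV hk r P σ α β m (Sum.inl (b, v)) = 1 := by
        simp only [htV]; rw [if_neg hval]
      rw [hpar, hroot0, hht]
      norm_num
  · have hpar : parV hk r P σ α β m (Sum.inr (Sum.inl x)) = rootV r m := by
      simp only [parV]
    have hht : htV hk r P σ α β m (Sum.inr (Sum.inl x)) = 1 := by
      simp only [htV]
    rw [hpar, hroot0, hht]
    norm_num
  · by_cases hg : AnchorOk r P σ α β m iF A ∧
        s ≠ trunkIdx hk (histOf r P σ α β m (m - (iF.val + 1)) A)
    · obtain ⟨h, hOk, hlen, hclA⟩ := hg.1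
      have hpar : parV hk r P σ α β m (Sum.inr (Sum.inr (iF, A, s))) =
          attachT hk r P σ α β m iF.val A := by
        simp only [parV]
        rw [if_pos hg]
      rw [hpar, attachT_ht hk r P σ α β m hα hOk hlen hclA]
      simp only [htV]
      rw [if_pos hg]
      have : (0:ℝ) < 2 ^ (iF.val + 1) := by positivity
      linarith
    · have hpar : parV hk r P σ α β m (Sum.inr (Sum.inr (iF, A, s))) = rootV r m := by
        simp only [parV]; rw [if_neg hg]
      have hht : htV hk r P σ α β m (Sum.inr (Sum.inr (iF, A, s))) = 1 := by
        simp only [htV]; rw [if_neg hg]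
      rw [hpar, hroot0, hht]
      norm_num

/-! ### ancestors along a stem -/

theorem anc_stem (hα : α ∈ Set.Ico (0 : ℝ) 1)
    (hpath : ∀ s, ∀ x ∈ P s, ∀ y ∈ P s, dist x y = |dist r x - dist r y|)
    {b : Option (Fin (m + 1) × Set X × Fin k)} {w : X}
    (hb : ValidB hk r P σ α β m b) (hw : w ∈ SB hk r P σ β m b) :
    ∀ n : ℕ, ∀ v, v ∈ SB hk r P σ β m b → dist r w ≤ dist r v →
      {u ∈ SB hk r P σ β m b | dist r u < dist r v}.ncard = n →
      TreeGen.Anc (parV hk r P σ α β m) (Sum.inl (b, w)) (Sum.inl (b, v)) := by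
  intro n
  induction n using Nat.strong_induction_on with
  | _ n ih =>
    intro v hv hle hcard
    rcases eq_or_lt_of_le hle with heq | hlt
    · have : w = v := path_eq_of_dist r P hpath (SB_sub_path hk r P σ β m b hw)
        (SB_sub_path hk r P σ β m b hv) heq
      rw [this]
      exact TreeGen.anc_refl _ _
    · have hminv : v ≠ minSt r (SB hk r P σ β m b) := by
        intro hveq
        have := minSt_min r ⟨v, hv⟩ w hw
        rw [← hveq] at this
        linarith
      have hD : {u ∈ SB hk r P σ β m b | dist r u < dist r v}.Nonempty := ⟨w, hw, hlt⟩
      have hpar : parV hk r P σ α β m (Sum.inl (b, v)) =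
          Sum.inl (b, predSt r (SB hk r P σ β m b) v) := by
        simp only [parV]
        rw [if_pos ⟨hb, hv⟩, if_neg hminv]
      obtain ⟨hpmem, hplt⟩ := predSt_mem r hD
      have hwp : dist r w ≤ dist r (predSt r (SB hk r P σ β m b) v) :=
        predSt_max r hD w hw hlt
      set p := predSt r (SB hk r P σ β m b) v with hp
      have hsub : {u ∈ SB hk r P σ β m b | dist r u < dist r p} ⊂
          {u ∈ SB hk r P σ β m b | dist r u < dist r v} := by
        constructor
        · rintro u ⟨hu1, hu2⟩
          exact ⟨hu1, hu2.trans hplt⟩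
        · intro hcon
          exact absurd (hcon ⟨hpmem, hplt⟩).2 (lt_irrefl _)
      have hlt' : {u ∈ SB hk r P σ β m b | dist r u < dist r p}.ncard < n := by
        rw [← hcard]
        exact Set.ncard_lt_ncard hsub (Set.toFinite _)
      have h1 := ih _ hlt' p hpmem hwp rfl
      refine TreeGen.anc_trans _ h1 ?_
      exact ⟨1, by simpa using hpar⟩

theorem stem_dist (hα : α ∈ Set.Ico (0 : ℝ) 1) (hr : ∀ s, r ∈ P s)
    (hpath : ∀ s, ∀ x ∈ P s, ∀ y ∈ P s, dist x y = |dist r x - dist r y|)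
    {b : Option (Fin (m + 1) × Set X × Fin k)} {v w : X}
    (hb : ValidB hk r P σ α β m b) (hv : v ∈ SB hk r P σ β m b)
    (hw : w ∈ SB hk r P σ β m b) :
    TreeGen.dd (parV hk r P σ α β m) (htV hk r P σ α β m)
      (Sum.inl (b, v)) (Sum.inl (b, w)) = |dist r v - dist r w| := by
  have hρ := parV_root hk r P σ α β m hr
  have hdec := htV_dec hk r P σ α β m hα hr hpath
  have core : ∀ v' w', v' ∈ SB hk r P σ β m b → w' ∈ SB hk r P σ β m b →
      dist r w' ≤ dist r v' →
      TreeGen.dd (parV hk r P σ α β m) (htV hk r P σ α β m)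
        (Sum.inl (b, v')) (Sum.inl (b, w')) = dist r v' - dist r w' := by
    intro v' w' hv' hw' hle
    have hanc := anc_stem hk r P σ α β m hα hpath hb hw' _ v' hv' hle rfl
    rw [TreeGen.dd_anc _ _ hρ hdec hanc]
    simp only [htV]
    rw [if_pos ⟨hb, hv'⟩, if_pos ⟨hb, hw'⟩]
    ring
  rcases le_total (dist r w) (dist r v) with hle | hle
  · rw [core v w hv hw hle, abs_of_nonneg (by linarith)]
  · rw [TreeGen.dd_comm _ _ hρ hdec, core w v hw hv hle, abs_sub_comm]
    rw [abs_of_nonneg (by linarith)]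

/-! ### parent history of a horizontal child -/

theorem pHist_eq (hα : α ∈ Set.Ico (0 : ℝ) 1) {i : ℕ} {Q : Set X} {l : Fin k}
    {h : List (Fin k × ℕ)} (hOk : Ok r P σ α β m h) (hlen : h.length + (i + 1) = m)
    (hQ : hchild P σ β (cl r P σ α β m h) i (σ.symm l) = Q) (hQne : Q.Nonempty) :
    pHist r P σ α β m i Q l = h := by
  have hex : ∃ hh : List (Fin k × ℕ), Ok r P σ α β m hh ∧ hh.length + (i + 1) = m ∧
      hchild P σ β (cl r P σ α β m hh) i (σ.symm l) = Q := ⟨h, hOk, hlen, hQ⟩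
  rw [pHist, dif_pos hex]
  obtain ⟨h1, h2, h3⟩ := hex.choose_spec
  refine cl_inj r P σ α β m hα _ _ h1 hOk (by omega) ?_
  obtain ⟨q, hq⟩ := hQne
  exact ⟨q, hchild_subset P σ β _ _ _ (h3 ▸ hq), hchild_subset P σ β _ _ _ (hQ ▸ hq)⟩

/-! ### geometry at scale 0 -/

theorem scale0_close (hα : α ∈ Set.Ico (0 : ℝ) 1) (hβ : β ∈ Set.Ico (1 : ℝ) 2)
    (hpath : ∀ s, ∀ x ∈ P s, ∀ y ∈ P s, dist x y = |dist r x - dist r y|)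
    (hmin : ∀ x y : X, x ≠ y → 1 ≤ dist x y) (hm1 : 1 ≤ m)
    {h : List (Fin k × ℕ)} {x v : X}
    (hlen : h.length = m) (hx : x ∈ cl r P σ α β m h)
    (hv : v ∈ stemDom r P (cl r P σ α β m h) (σ (trunkIdx hk h))) : dist x v < 1/2 := by
  match h with
  | [] => exact absurd hlen (by simpa using (by omega : ¬ (0 = m)))
  | (s, j) :: h₀ =>
    have hsc : m - (h₀.length + 1) = 0 := by
      have : h₀.length + 1 = m := by simpa using hlen
      omega
    have hcl : cl r P σ α β m ((s, j) :: h₀) =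
        vchild r P σ α β (cl r P σ α β m h₀) 0 s j := by
      simp only [cl, hsc]
    obtain ⟨hxh, hb1, hb2⟩ := hcl ▸ hx
    obtain ⟨p, hpP, hpd⟩ := hchild_subset_nbr P σ β _ _ _ hxh
    obtain ⟨hvP, hvInf, hvSup⟩ := hv
    have himg : ((fun a => dist r a) '' cl r P σ α β m ((s, j) :: h₀)).Nonempty :=
      ⟨dist r x, x, hx, rfl⟩
    have hband : ∀ a ∈ cl r P σ α β m ((s, j) :: h₀),
        ((j : ℝ) - 1 + α) * (2 ^ (0:ℕ) / 4) ≤ dist r a ∧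
          dist r a < ((j : ℝ) + α) * (2 ^ (0:ℕ) / 4) := by
      intro a ha
      exact (hcl ▸ ha).2
    have hInf : ((j : ℝ) - 1 + α) * (2 ^ (0:ℕ) / 4) ≤
        sInf ((fun a => dist r a) '' cl r P σ α β m ((s, j) :: h₀)) := by
      apply le_csInf himg
      rintro y ⟨a, ha, rfl⟩
      exact (hband a ha).1
    obtain ⟨a₀, ha₀, ha₀max⟩ := Set.exists_max_image _ (fun a => dist r a)
      (Set.toFinite _) (⟨x, hx⟩ : (cl r P σ α β m ((s, j) :: h₀)).Nonempty)
    have hSup : sSup ((fun a => dist r a) '' cl r P σ α β m ((s, j) :: h₀)) ≤ dist r a₀ := by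
      apply csSup_le himg
      rintro y ⟨a, ha, rfl⟩
      exact ha₀max a ha
    have hvub : dist r v < ((j : ℝ) + α) * (2 ^ (0:ℕ) / 4) :=
      lt_of_le_of_lt (hvSup.trans hSup) (hband a₀ ha₀).2
    have hvlb : ((j : ℝ) - 1 + α) * (2 ^ (0:ℕ) / 4) ≤ dist r v := hInf.trans hvInf
    have hq : (2:ℝ) ^ (0:ℕ) / 4 = 1/4 := by norm_num
    rw [hq] at hvub hvlb hb1 hb2 hpd
    have hxv : |dist r x - dist r v| < 1/4 := by
      rw [abs_lt]
      constructor <;> nlinarith [hα.1, hα.2]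
    have hpx : |dist r p - dist r x| ≤ β * (1/4) := by
      have := abs_dist_sub_le p x r
      rw [dist_comm p r, dist_comm x r] at this
      exact this.trans (by rw [dist_comm p x]; exact hpd)
    have hpv : p = v := by
      by_contra hne
      have h1 : (1:ℝ) ≤ dist p v := hmin p v hne
      have h2 : dist p v = |dist r p - dist r v| := hpath _ p hpP v hvP
      have h3 : |dist r p - dist r v| ≤ |dist r p - dist r x| + |dist r x - dist r v| := by
        calc |dist r p - dist r v| = |(dist r p - dist r x) + (dist r x - dist r v)| := by
              ring_nf
          _ ≤ _ := abs_add_le _ _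
      have hβ2 : β * (1/4) < 1/2 := by nlinarith [hβ.2]
      rw [h2] at h1
      linarith
    rw [← hpv]
    exact lt_of_le_of_lt hpd (by nlinarith [hβ.2])

/-! ### hroot lemmas -/

theorem fV_spec (hα : α ∈ Set.Ico (0 : ℝ) 1) {x : X} {h : List (Fin k × ℕ)}
    (hOk : Ok r P σ α β m h) (hlen : h.length = m) (hxcl : x ∈ cl r P σ α β m h)
    (hvne : (stemDom r P (cl r P σ α β m h) (σ (trunkIdx hk h))).Nonempty) :
    fV hk r P σ α β m x =
      Sum.inl (brhE hk r P σ α β m h,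
        minSt r (stemDom r P (cl r P σ α β m h) (σ (trunkIdx hk h)))) := by
  have hex : ∃ hh : List (Fin k × ℕ), Ok r P σ α β m hh ∧ hh.length = m ∧
      x ∈ cl r P σ α β m hh ∧
      (stemDom r P (cl r P σ α β m hh) (σ (trunkIdx hk hh))).Nonempty :=
    ⟨h, hOk, hlen, hxcl, hvne⟩
  rw [fV, dif_pos hex]
  have hch : hex.choose = h := by
    obtain ⟨h1, h2, h3, h4⟩ := hex.choose_spec
    exact cl_inj r P σ α β m hα _ _ h1 hOk (by omega) ⟨x, h3, hxcl⟩
  simp only [stemV, hch]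
  rw [histOf_eq r P σ α β m hα hOk (by omega) rfl]

theorem hroot_trunk_eq_attach (hα : α ∈ Set.Ico (0 : ℝ) 1) {i : ℕ} {A : Set X}
    {hA : List (Fin k × ℕ)} {t : Fin k} (hOk : Ok r P σ α β m hA)
    (hlen : hA.length + (i + 1) = m) (hclA : cl r P σ α β m hA = A)
    (ht : t = trunkIdx hk hA) (hAtne : (hchild P σ β A i t).Nonempty) :
    hrootV hk r P σ α β m i (hchild P σ β A i t) (σ t) =
      attachT hk r P σ α β m i A := by
  have hsymm : σ.symm (σ t) = t := σ.symm_apply_apply t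
  have hhist : histOf r P σ α β m (m - (i + 1)) A = hA :=
    histOf_eq r P σ α β m hα hOk (by omega) hclA
  have hph : pHist r P σ α β m i (hchild P σ β A i t) (σ t) = hA := by
    apply pHist_eq r P σ α β m hα hOk hlen _ hAtne
    rw [hsymm, hclA]
  have hbr : brhE hk r P σ α β m ((t, 0) :: hA) = brhE hk r P σ α β m hA := by
    simp only [brhE]
    rw [if_pos ht]
  rw [hrootV, attachT, hhist, ← ht]
  by_cases hne : (stemDom r P (hchild P σ β A i t) (σ t)).Nonempty
  · rw [if_pos hne, if_pos ⟨hAtne, hne⟩]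
    simp only [hstemV, hph, hsymm, hbr]
  · rw [if_neg hne, if_neg (by rintro ⟨-, h2⟩; exact hne h2)]
    rw [hph, hclA, hsymm]

theorem hroot_sib (hα : α ∈ Set.Ico (0 : ℝ) 1) {i : ℕ} {A : Set X}
    {hA : List (Fin k × ℕ)} {s : Fin k} (hOk : Ok r P σ α β m hA)
    (hlen : hA.length + (i + 1) = m) (hclA : cl r P σ α β m hA = A)
    (hs : s ≠ trunkIdx hk hA) (hAsne : (hchild P σ β A i s).Nonempty) :
    parV hk r P σ α β m (hrootV hk r P σ α β m i (hchild P σ β A i s) (σ s)) =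
        attachT hk r P σ α β m i A ∧
      htV hk r P σ α β m (hrootV hk r P σ α β m i (hchild P σ β A i s) (σ s)) =
        tAv hk r P σ α β m i A + 2 ^ (i + 1) := by
  have hsymm : σ.symm (σ s) = s := σ.symm_apply_apply s
  have hiv : (eF m i).val = i := by simp only [eF]; omega
  have hhist : histOf r P σ α β m (m - (i + 1)) A = hA :=
    histOf_eq r P σ α β m hα hOk (by omega) hclA
  have hph : pHist r P σ α β m i (hchild P σ β A i s) (σ s) = hA := by
    apply pHist_eq r P σ α β m hα hOk hlen _ hAsne
    rw [hsymm, hclA]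
  by_cases hne : (stemDom r P (hchild P σ β A i s) (σ s)).Nonempty
  · have hbr : brhE hk r P σ α β m ((s, 0) :: hA) = mkB m i A s := by
      simp only [brhE]
      rw [if_neg hs, show m - (hA.length + 1) = i by omega, hclA]
    have hu : hrootV hk r P σ α β m i (hchild P σ β A i s) (σ s) =
        Sum.inl (mkB m i A s, minSt r (stemDom r P (hchild P σ β A i s) (σ s))) := by
      rw [hrootV, if_pos hne]
      simp only [hstemV, hph, hsymm, hbr]
    have hSB : SB hk r P σ β m (mkB m i A s) = stemDom r P (hchild P σ β A i s) (σ s) :=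
      SB_mkB hk r P σ β m (by omega) A s
    have hval : ValidB hk r P σ α β m (mkB m i A s) := by
      refine ⟨hA, hOk, ?_, hclA, hs⟩
      simp only [mkB, hiv]
      omega
    have hmem : minSt r (stemDom r P (hchild P σ β A i s) (σ s)) ∈
        SB hk r P σ β m (mkB m i A s) := by
      rw [hSB]; exact minSt_mem r hne
    have hoffb : offB hk r P σ α β m (mkB m i A s) =
        tAv hk r P σ α β m i A + 2 ^ (i + 1) -
          dist r (minSt r (stemDom r P (hchild P σ β A i s) (σ s))) := by
      rw [← hclA, offB_mkB hk r P σ α β m hα hOk hlen s,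
        off_cons hk r P σ α β m hα hOk hs hlen 0, hclA]
    constructor
    · rw [hu]
      simp only [parV]
      rw [if_pos]
      · rw [if_pos]
        · simp only [mkB, hiv]
        · have := hSB
          simp only [mkB] at this
          rw [hSB]
      · have h1 := hval
        have h2 := hmem
        simp only [mkB] at h1 h2
        exact ⟨h1, h2⟩
    · rw [hu]
      simp only [htV]
      rw [if_pos ⟨hval, hmem⟩, hoffb]
      ring
  · have hu : hrootV hk r P σ α β m i (hchild P σ β A i s) (σ s) =
        Sum.inr (Sum.inr (eF m i, A, s)) := by
      rw [hrootV, if_neg hne, hph, hclA, hsymm]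
    have hg : AnchorOk r P σ α β m (eF m i) A ∧
        s ≠ trunkIdx hk (histOf r P σ α β m (m - ((eF m i).val + 1)) A) := by
      constructor
      · exact ⟨hA, hOk, by rw [hiv]; omega, hclA⟩
      · rw [hiv, hhist]; exact hs
    constructor
    · rw [hu]
      simp only [parV]
      rw [if_pos hg, hiv]
    · rw [hu]
      simp only [htV]
      rw [if_pos hg, hiv]

end S5

/-- invariant (I). For every permutation `σ`, every `α ∈ [0,1)` and
`β ∈ [1,2)`, the recursive tree construction succeeds: there is construction data
(`TreeCon`) for the alternating partitions; in particular, for every level `i ∈ {0,…,m}`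
and every cluster `A ∈ C i` with trunk `P l`, the tree contains the stem of `A`: copies
of the points `{v ∈ P l : top A ≤ d r v ≤ bottom A}`, the tree distance between the
copies of any two such points `v, w` being `|d r v − d r w|` (field `stem_isom`). -/
theorem statement5 {k : ℕ} (hk : 0 < k) (r : X) (P : Fin k → Set X) (m : ℕ)
    (hr : ∀ s, r ∈ P s) (hcov : (⋃ s, P s) = Set.univ)
    (hpath : ∀ s, ∀ x ∈ P s, ∀ y ∈ P s, dist x y = |dist r x - dist r y|)
    (hmin : ∀ x y : X, x ≠ y → 1 ≤ dist x y)
    (hm : (m : ℤ) = 2 + ⌈Real.logb 2 (Metric.diam (Set.univ : Set X))⌉)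
    (σ : Equiv.Perm (Fin k)) (α β : ℝ)
    (hα : α ∈ Set.Ico (0 : ℝ) 1) (hβ : β ∈ Set.Ico (1 : ℝ) 2) :
    Nonempty (TreeCon hk r P σ α β m) := by
  classical
  have hm1 : (1:ℕ) ≤ m := by
    have hd : 0 ≤ ⌈Real.logb 2 (Metric.diam (Set.univ : Set X))⌉ := by
      by_cases hsing : ∀ x y : X, x = y
      · have hsub : (Set.univ : Set X).Subsingleton := fun a _ b _ => hsing a b
        rw [Metric.diam_subsingleton hsub, Real.logb_zero]
        norm_num
      · push_neg at hsing
        obtain ⟨x, y, hxy⟩ := hsing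
        have h2 : dist x y ≤ Metric.diam (Set.univ : Set X) :=
          Metric.dist_le_diam_of_mem Set.finite_univ.isBounded trivial trivial
        exact Int.ceil_nonneg (Real.logb_nonneg (by norm_num)
          (le_trans (hmin x y hxy) h2))
    have h2 : (2:ℤ) ≤ (m:ℤ) := by rw [hm]; linarith
    omega
  have hρ : S5.parV hk r P σ α β m (S5.rootV r m) = S5.rootV r m :=
    S5.parV_root hk r P σ α β m hr
  have hdec := S5.htV_dec hk r P σ α β m hα hr hpath
  refine ⟨{
    T := ⟨S5.CT X k m, Fintype.ofFinite _, TreeGen.treeMetric _ _ hρ hdec⟩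
    tree := ?tree
    f := S5.fV hk r P σ α β m
    f_inj := ?finj
    stem := S5.stemV hk r P σ α β m
    hstem := S5.hstemV hk r P σ α β m
    hroot := S5.hrootV hk r P σ α β m
    stem_isom := ?isom
    stem_base := ?base
    hstem_isom := ?hisom
    vert_glue := ?glue
    stem_trunk := ?trunk
    hroot_spec := ?spec
    horiz_edge := ?edge }⟩
  case tree =>
    intro w x y z
    exact TreeGen.dd_four _ _ hρ hdec w x y z
  case finj =>
    intro x y hxy
    by_cases hx1 : ∃ h : List (Fin k × ℕ), S5.Ok r P σ α β m h ∧ h.length = m ∧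
        x ∈ S5.cl r P σ α β m h ∧
        (stemDom r P (S5.cl r P σ α β m h) (σ (S5.trunkIdx hk h))).Nonempty
    · by_cases hy1 : ∃ h : List (Fin k × ℕ), S5.Ok r P σ α β m h ∧ h.length = m ∧
          y ∈ S5.cl r P σ α β m h ∧
          (stemDom r P (S5.cl r P σ α β m h) (σ (S5.trunkIdx hk h))).Nonempty
      · obtain ⟨h1, hOk1, hlen1, hxcl1, hne1⟩ := hx1
        obtain ⟨h2, hOk2, hlen2, hycl2, hne2⟩ := hy1
        rw [S5.fV_spec hk r P σ α β m hα hOk1 hlen1 hxcl1 hne1,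
          S5.fV_spec hk r P σ α β m hα hOk2 hlen2 hycl2 hne2] at hxy
        injection hxy with hpq
        injection hpq with hbeq hveq
        have hcx := S5.scale0_close hk r P σ α β m hα hβ hpath hmin hm1 hlen1 hxcl1
          (S5.minSt_mem r hne1)
        have hcy := S5.scale0_close hk r P σ α β m hα hβ hpath hmin hm1 hlen2 hycl2
          (S5.minSt_mem r hne2)
        by_contra hne
        have hxy1 := hmin x y hne
        have htri := dist_triangle x
          (S5.minSt r (stemDom r P (S5.cl r P σ α β m h2) (σ (S5.trunkIdx hk h2)))) y
        rw [hveq] at hcx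
        rw [dist_comm] at hcy
        linarith
      · rw [S5.fV_spec hk r P σ α β m hα hx1.choose_spec.1 hx1.choose_spec.2.1
          hx1.choose_spec.2.2.1 hx1.choose_spec.2.2.2, S5.fV, dif_neg hy1] at hxy
        exact (Sum.inl_ne_inr hxy).elim
    · by_cases hy1 : ∃ h : List (Fin k × ℕ), S5.Ok r P σ α β m h ∧ h.length = m ∧
          y ∈ S5.cl r P σ α β m h ∧
          (stemDom r P (S5.cl r P σ α β m h) (σ (S5.trunkIdx hk h))).Nonempty
      · rw [S5.fV_spec hk r P σ α β m hα hy1.choose_spec.1 hy1.choose_spec.2.1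
          hy1.choose_spec.2.2.1 hy1.choose_spec.2.2.2, S5.fV, dif_neg hx1] at hxy
        exact (Sum.inl_ne_inr hxy.symm).elim
      · rw [S5.fV, dif_neg hx1, S5.fV, dif_neg hy1] at hxy
        injection hxy with h'
        injection h'
  case isom =>
    intro i hi A l hmem v hv w hw
    obtain ⟨h, hlen, hclA, htr, hAne⟩ := (S5.partsT_char hk r P σ α β m i A l).1 hmem
    have hOk : S5.Ok r P σ α β m h := ⟨by omega, by rw [hclA]; exact hAne⟩
    have hhist : S5.histOf r P σ α β m (m - i) A = h :=
      S5.histOf_eq r P σ α β m hα hOk hlen hclA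
    have hv' : v ∈ S5.SB hk r P σ β m (S5.brhE hk r P σ α β m h) :=
      S5.stemDom_sub_brhE hk r P σ α β m h hOk (by rw [hclA, htr]; exact hv)
    have hw' : w ∈ S5.SB hk r P σ β m (S5.brhE hk r P σ α β m h) :=
      S5.stemDom_sub_brhE hk r P σ α β m h hOk (by rw [hclA, htr]; exact hw)
    show TreeGen.dd (S5.parV hk r P σ α β m) (S5.htV hk r P σ α β m)
      (S5.stemV hk r P σ α β m i A l v) (S5.stemV hk r P σ α β m i A l w) = _
    simp only [S5.stemV, hhist]
    exact S5.stem_dist hk r P σ α β m hα hr hpath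
      (S5.brhE_valid hk r P σ α β m h hOk) hv' hw'
  case base =>
    intro A l hmem x hx v hv
    obtain ⟨h, hlen, hclA, htr, hAne⟩ := (S5.partsT_char hk r P σ α β m 0 A l).1 hmem
    have hlen' : h.length = m := by omega
    have hOk : S5.Ok r P σ α β m h := ⟨by omega, by rw [hclA]; exact hAne⟩
    have hv' : v ∈ stemDom r P (S5.cl r P σ α β m h) (σ (S5.trunkIdx hk h)) := by
      rw [hclA, htr]; exact hv
    have hxcl : x ∈ S5.cl r P σ α β m h := by rw [hclA]; exact hx
    rw [S5.fV_spec hk r P σ α β m hα hOk hlen' hxcl ⟨v, hv'⟩]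
    show S5.stemV hk r P σ α β m 0 A l v = _
    simp only [S5.stemV]
    rw [S5.histOf_eq r P σ α β m hα hOk (by omega) hclA]
    have h1 : dist x v < 1/2 :=
      S5.scale0_close hk r P σ α β m hα hβ hpath hmin hm1 hlen' hxcl hv'
    have h2 : dist x (S5.minSt r (stemDom r P (S5.cl r P σ α β m h)
        (σ (S5.trunkIdx hk h)))) < 1/2 :=
      S5.scale0_close hk r P σ α β m hα hβ hpath hmin hm1 hlen' hxcl
        (S5.minSt_mem r ⟨v, hv'⟩)
    have hveq : v = S5.minSt r (stemDom r P (S5.cl r P σ α β m h) (σ (S5.trunkIdx hk h))) := by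
      by_contra hne
      have h3 := hmin v _ hne
      have h4 := dist_triangle v x
        (S5.minSt r (stemDom r P (S5.cl r P σ α β m h) (σ (S5.trunkIdx hk h))))
      rw [dist_comm v x] at h4
      linarith
    rw [hveq]
  case hisom =>
    intro i hi A hA_mem s hQne v hv w hw
    obtain ⟨l₀, hmem⟩ := hA_mem
    obtain ⟨h, hlen, hclA, htr, hAne⟩ :=
      (S5.partsT_char hk r P σ α β m (i+1) A l₀).1 hmem
    have hOk : S5.Ok r P σ α β m h := ⟨by omega, by rw [hclA]; exact hAne⟩
    have hlen' : h.length + (i + 1) = m := by omega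
    have hsymm : σ.symm (σ s) = s := σ.symm_apply_apply s
    have hph : S5.pHist r P σ α β m i (hchild P σ β A i s) (σ s) = h :=
      S5.pHist_eq r P σ α β m hα hOk hlen' (by rw [hsymm, hclA]) hQne
    show TreeGen.dd (S5.parV hk r P σ α β m) (S5.htV hk r P σ α β m)
      (S5.hstemV hk r P σ α β m i (hchild P σ β A i s) (σ s) v)
      (S5.hstemV hk r P σ α β m i (hchild P σ β A i s) (σ s) w) = _
    simp only [S5.hstemV, hph, hsymm]
    by_cases hst : s = S5.trunkIdx hk h
    · have hbr : S5.brhE hk r P σ α β m ((s, 0) :: h) = S5.brhE hk r P σ α β m h := by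
        simp only [S5.brhE]; rw [if_pos hst]
      rw [hbr]
      have hsub : stemDom r P (hchild P σ β A i s) (σ s) ⊆
          S5.SB hk r P σ β m (S5.brhE hk r P σ α β m h) := by
        refine subset_trans ?_ (S5.stemDom_sub_brhE hk r P σ α β m h hOk)
        rw [show (σ (S5.trunkIdx hk h)) = σ s by rw [← hst]]
        apply S5.stemDom_mono r P hQne
        rw [← hclA] at *
        exact S5.hchild_subset P σ β _ _ _
      exact S5.stem_dist hk r P σ α β m hα hr hpath
        (S5.brhE_valid hk r P σ α β m h hOk) (hsub hv) (hsub hw)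
    · have hbr : S5.brhE hk r P σ α β m ((s, 0) :: h) =
          S5.mkB m i (S5.cl r P σ α β m h) s := by
        simp only [S5.brhE]
        rw [if_neg hst, show m - (h.length + 1) = i by omega]
      rw [hbr]
      have hval : S5.ValidB hk r P σ α β m (S5.mkB m i (S5.cl r P σ α β m h) s) := by
        refine ⟨h, hOk, ?_, rfl, hst⟩
        simp only [S5.mkB, S5.eF]
        omega
      have hSB : S5.SB hk r P σ β m (S5.mkB m i (S5.cl r P σ α β m h) s) =
          stemDom r P (hchild P σ β A i s) (σ s) := by
        rw [S5.SB_mkB hk r P σ β m (by omega), hclA]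
      exact S5.stem_dist hk r P σ α β m hα hr hpath hval
        (by rw [hSB]; exact hv) (by rw [hSB]; exact hw)
  case glue =>
    intro i hi A hA_mem s j hVne v hv
    obtain ⟨l₀, hmem⟩ := hA_mem
    obtain ⟨h, hlen, hclA, htr, hAne⟩ :=
      (S5.partsT_char hk r P σ α β m (i+1) A l₀).1 hmem
    have hOk : S5.Ok r P σ α β m h := ⟨by omega, by rw [hclA]; exact hAne⟩
    have hlen' : h.length + (i + 1) = m := by omega
    have hQne : (hchild P σ β A i s).Nonempty :=
      hVne.mono (S5.vchild_subset r P σ α β A i s j)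
    have hcl' : S5.cl r P σ α β m ((s, j) :: h) = vchild r P σ α β A i s j := by
      simp only [S5.cl]
      rw [show m - (h.length + 1) = i by omega, hclA]
    have hOk' : S5.Ok r P σ α β m ((s, j) :: h) :=
      ⟨by simp only [List.length_cons]; omega, by rw [hcl']; exact hVne⟩
    have hsymm : σ.symm (σ s) = s := σ.symm_apply_apply s
    show S5.stemV hk r P σ α β m i (vchild r P σ α β A i s j) (σ s) v =
      S5.hstemV hk r P σ α β m i (hchild P σ β A i s) (σ s) v
    simp only [S5.stemV, S5.hstemV, hsymm]
    rw [S5.histOf_eq r P σ α β m hα hOk' (by simp only [List.length_cons]; omega) hcl',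
      S5.pHist_eq r P σ α β m hα hOk hlen' (by rw [hsymm, hclA]) hQne]
    simp only [S5.brhE]
  case trunk =>
    intro i hi A l hmem t htl hAtne v hv
    obtain ⟨h, hlen, hclA, htr, hAne⟩ :=
      (S5.partsT_char hk r P σ α β m (i+1) A l).1 hmem
    have hOk : S5.Ok r P σ α β m h := ⟨by omega, by rw [hclA]; exact hAne⟩
    have hlen' : h.length + (i + 1) = m := by omega
    have htt : t = S5.trunkIdx hk h := σ.injective (htl.trans htr.symm)
    have hsymm : σ.symm (σ t) = t := σ.symm_apply_apply t
    show S5.stemV hk r P σ α β m (i+1) A l v =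
      S5.hstemV hk r P σ α β m i (hchild P σ β A i t) (σ t) v
    simp only [S5.stemV, S5.hstemV, hsymm]
    rw [S5.histOf_eq r P σ α β m hα hOk (by omega) hclA,
      S5.pHist_eq r P σ α β m hα hOk hlen' (by rw [hsymm, hclA]) hAtne]
    have hbr : S5.brhE hk r P σ α β m ((t, 0) :: h) = S5.brhE hk r P σ α β m h := by
      simp only [S5.brhE]; rw [if_pos htt]
    rw [hbr]
  case spec =>
    intro i hi A hA_mem s hne
    exact ⟨S5.minSt r _, S5.minSt_mem r hne, S5.minSt_min r hne,
      by rw [S5.hrootV, if_pos hne]⟩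
  case edge =>
    intro i hi A l hmem t htl hAtne s hst hAsne
    obtain ⟨h, hlen, hclA, htr, hAne⟩ :=
      (S5.partsT_char hk r P σ α β m (i+1) A l).1 hmem
    have hOk : S5.Ok r P σ α β m h := ⟨by omega, by rw [hclA]; exact hAne⟩
    have hlen' : h.length + (i + 1) = m := by omega
    have htt : t = S5.trunkIdx hk h := σ.injective (htl.trans htr.symm)
    obtain ⟨hp, hh⟩ := S5.hroot_sib hk r P σ α β m hα hOk hlen' hclA
      (by rw [← htt]; exact hst) hAsne
    have h1 : S5.hrootV hk r P σ α β m i (hchild P σ β A i t) (σ t) =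
        S5.attachT hk r P σ α β m i A :=
      S5.hroot_trunk_eq_attach hk r P σ α β m hα hOk hlen' hclA htt hAtne
    show TreeGen.dd (S5.parV hk r P σ α β m) (S5.htV hk r P σ α β m)
      (S5.hrootV hk r P σ α β m i (hchild P σ β A i s) (σ s))
      (S5.hrootV hk r P σ α β m i (hchild P σ β A i t) (σ t)) = _
    rw [h1, ← hp]
    rw [TreeGen.dd_anc _ _ hρ hdec (TreeGen.anc_par _ _)]
    rw [hp, S5.attachT_ht hk r P σ α β m hα hOk hlen' hclA, hh]
    ring
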